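/- Let Γ ⊂ ℂ^× be a torsion-free multiplicative subgroup which is free of rank t ≥ 1. The set R_Γ of all sequences ℕ → ℂ that are linear recurrence sequences (or identically zero) whose roots all belong to Γ forms a subring of the ring of all functions ℕ → ℂ under pointwise addition and multiplication, and R_Γ is isomorphic as a ring to the Laurent polynomial ring ℂ[X, T₁, …, T_t, T₁^{−1}, …, T_t^{−1}]; in particular R_Γ is a unique factorisation domain. -/

import Mathlib

open Polynomial

/-- A linear recurrence (polynomial–exponential) sequence over `ℂ` all of whose roots lie in
the subgroup `Γ ⊆ ℂˣ` (the identically zero sequence corresponds to `r = 0`). -/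
def IsLinRecWithRootsIn (Γ : Subgroup ℂˣ) (f : ℕ → ℂ) : Prop :=
  ∃ (r : ℕ) (u : Fin r → Polynomial ℂ) (α : Fin r → ℂˣ),
    (∀ i, u i ≠ 0) ∧ Function.Injective α ∧ (∀ i, α i ∈ Γ) ∧
    ∀ n, f n = ∑ i, (u i).eval (n : ℂ) * (α i : ℂ) ^ n


private lemma comp_shift_natDegree (p : Polynomial ℂ) :
    (p.comp (X + C 1)).natDegree = p.natDegree := by
  rw [natDegree_comp, natDegree_X_add_C, mul_one]

private lemma comp_shift_coeff_top (p : Polynomial ℂ) :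
    (p.comp (X + C 1)).coeff p.natDegree = p.coeff p.natDegree := by
  have h2 := Polynomial.leadingCoeff_comp (p := p) (q := X + C (1:ℂ))
      (by rw [natDegree_X_add_C]; exact one_ne_zero)
  rw [(monic_X_add_C (1:ℂ)).leadingCoeff, one_pow, mul_one] at h2
  rwa [Polynomial.leadingCoeff, Polynomial.leadingCoeff, comp_shift_natDegree] at h2

private lemma keyIndep {ι : Type*} [DecidableEq ι] :
    ∀ (k : ℕ) (T : Finset ι) (c : ι → ℂˣ), Set.InjOn c ↑T →
    ∀ u : ι → Polynomial ℂ, (∀ g ∈ T, u g ≠ 0) → T.Nonempty →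
    ((∑ g ∈ T, (u g).natDegree) + T.card = k) →
    (∀ n : ℕ, ∑ g ∈ T, (u g).eval (n:ℂ) * ((c g : ℂ))^n = 0) → False := by
  intro k
  induction k using Nat.strong_induction_on with
  | _ k IH =>
  intro T c hinj u hu hne hk hsum
  obtain ⟨g₀, hg₀⟩ := hne
  by_cases hT : ∀ g ∈ T, g = g₀
  · have hTeq : T = {g₀} := Finset.eq_singleton_iff_unique_mem.mpr ⟨hg₀, hT⟩
    have hroot : ∀ n : ℕ, (u g₀).eval (n:ℂ) = 0 := by
      intro n
      have h := hsum n
      rw [hTeq, Finset.sum_singleton] at h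
      have hc : ((c g₀ : ℂ))^n ≠ 0 := pow_ne_zero _ (Units.ne_zero _)
      exact (mul_eq_zero.mp h).resolve_right hc
    have : u g₀ = 0 := by
      apply eq_zero_of_infinite_isRoot
      apply Set.Infinite.mono (s := Set.range (Nat.cast : ℕ → ℂ))
      · rintro x ⟨n, rfl⟩; exact hroot n
      · exact Set.infinite_range_of_injective Nat.cast_injective
    exact hu g₀ hg₀ this
  · push_neg at hT
    obtain ⟨g₁, hg₁T, hg₁⟩ := hT
    set v : ι → Polynomial ℂ :=
      fun g => ((c g : ℂ)) • (u g).comp (X + C 1) - ((c g₀ : ℂ)) • u g with hv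
    have hdegle : ∀ g, (v g).natDegree ≤ (u g).natDegree := by
      intro g
      apply le_trans (natDegree_sub_le _ _)
      simp only [max_le_iff]
      constructor
      · exact le_trans (natDegree_smul_le _ _) (le_of_eq (comp_shift_natDegree _))
      · exact natDegree_smul_le _ _
    have hcoefftop : ∀ g, (v g).coeff (u g).natDegree
        = ((c g : ℂ) - (c g₀ : ℂ)) * (u g).coeff (u g).natDegree := by
      intro g
      simp only [hv, coeff_sub, coeff_smul, smul_eq_mul, comp_shift_coeff_top]
      ring
    have hne' : ∀ g ∈ T, g ≠ g₀ → v g ≠ 0 ∧ (v g).natDegree = (u g).natDegree := by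
      intro g hg hgne
      have hcne : (c g : ℂ) - (c g₀ : ℂ) ≠ 0 := by
        intro h
        apply hgne
        apply hinj hg hg₀
        exact Units.ext (by linear_combination h)
      have hlc : (u g).coeff (u g).natDegree ≠ 0 := by
        have := Polynomial.leadingCoeff_ne_zero.mpr (hu g hg)
        rwa [Polynomial.leadingCoeff] at this
      have hcoeff : (v g).coeff (u g).natDegree ≠ 0 := by
        rw [hcoefftop]
        exact mul_ne_zero hcne hlc
      exact ⟨fun h => hcoeff (by simp [h]),
        le_antisymm (hdegle g) (le_natDegree_of_ne_zero hcoeff)⟩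
    have hg₀deg : v g₀ ≠ 0 → (v g₀).natDegree < (u g₀).natDegree := by
      intro hvne
      rcases lt_or_eq_of_le (hdegle g₀) with h | h
      · exact h
      · exfalso
        apply hvne
        rw [← Polynomial.leadingCoeff_eq_zero, Polynomial.leadingCoeff, h, hcoefftop]
        simp
    have hsum' : ∀ n : ℕ, ∑ g ∈ T, (v g).eval (n:ℂ) * ((c g : ℂ))^n = 0 := by
      intro n
      have h1 := hsum (n+1)
      have h0 := hsum n
      have : ∑ g ∈ T, (v g).eval (n:ℂ) * ((c g : ℂ))^n
          = (∑ g ∈ T, (u g).eval ((n+1 : ℕ):ℂ) * ((c g : ℂ))^(n+1))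
            - (c g₀ : ℂ) * ∑ g ∈ T, (u g).eval (n:ℂ) * ((c g : ℂ))^n := by
        rw [Finset.mul_sum, ← Finset.sum_sub_distrib]
        apply Finset.sum_congr rfl
        intro g hg
        simp only [hv, eval_sub, eval_smul, eval_comp, eval_add, eval_X, eval_C,
          smul_eq_mul, Nat.cast_add, Nat.cast_one]
        ring
      rw [h1, h0] at this
      simpa using this
    classical
    set T' : Finset ι := T.filter (fun g => v g ≠ 0) with hT'
    have hsubT : T' ⊆ T := Finset.filter_subset _ _
    have hg₁T' : g₁ ∈ T' := Finset.mem_filter.mpr ⟨hg₁T, (hne' g₁ hg₁T hg₁).1⟩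
    have hsum'' : ∀ n : ℕ, ∑ g ∈ T', (v g).eval (n:ℂ) * ((c g : ℂ))^n = 0 := by
      intro n
      rw [← hsum' n]
      apply Finset.sum_filter_of_ne
      intro g _ h hvz
      exact h (by simp [hvz])
    have hmeas : (∑ g ∈ T', (v g).natDegree) + T'.card < k := by
      subst hk
      have hcard : T'.card ≤ T.card := Finset.card_le_card hsubT
      by_cases hvg₀ : v g₀ = 0
      · have hsub2 : T' ⊆ T.erase g₀ := by
          intro g hg
          rcases Finset.mem_filter.mp hg with ⟨hgT, hgv⟩
          exact Finset.mem_erase.mpr ⟨fun h => hgv (h ▸ hvg₀), hgT⟩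
        have hdeq : ∑ g ∈ T', (v g).natDegree = ∑ g ∈ T', (u g).natDegree := by
          apply Finset.sum_congr rfl
          intro g hg
          rcases Finset.mem_filter.mp hg with ⟨hgT, hgv⟩
          exact (hne' g hgT (fun h => hgv (h ▸ hvg₀))).2
        have hle : ∑ g ∈ T', (u g).natDegree ≤ ∑ g ∈ T, (u g).natDegree :=
          Finset.sum_le_sum_of_subset hsubT
        have hTpos : 0 < T.card := Finset.card_pos.mpr ⟨g₀, hg₀⟩
        have hcard2 := Finset.card_le_card hsub2
        rw [Finset.card_erase_of_mem hg₀] at hcard2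
        omega
      · have hg₀T' : g₀ ∈ T' := Finset.mem_filter.mpr ⟨hg₀, hvg₀⟩
        have h1 : ∑ g ∈ T'.erase g₀, (v g).natDegree + (v g₀).natDegree
            = ∑ g ∈ T', (v g).natDegree := Finset.sum_erase_add _ _ hg₀T'
        have h2 : ∑ g ∈ T.erase g₀, (u g).natDegree + (u g₀).natDegree
            = ∑ g ∈ T, (u g).natDegree := Finset.sum_erase_add _ _ hg₀
        have h3 : ∑ g ∈ T'.erase g₀, (v g).natDegree
            = ∑ g ∈ T'.erase g₀, (u g).natDegree := by
          apply Finset.sum_congr rfl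
          intro g hg
          rcases Finset.mem_erase.mp hg with ⟨hgne, hgT'⟩
          exact (hne' g (hsubT hgT') hgne).2
        have h4 : ∑ g ∈ T'.erase g₀, (u g).natDegree
            ≤ ∑ g ∈ T.erase g₀, (u g).natDegree :=
          Finset.sum_le_sum_of_subset (Finset.erase_subset_erase _ hsubT)
        have h5 := hg₀deg hvg₀
        omega
    exact IH _ hmeas T' c (hinj.mono (Finset.coe_subset.mpr hsubT)) v
      (fun g hg => (Finset.mem_filter.mp hg).2) ⟨g₁, hg₁T'⟩ rfl hsum''


private theorem locUFD {R L : Type*} [CommRing R] [IsDomain R] [UniqueFactorizationMonoid R]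
    (M : Submonoid R) (hM : M ≤ nonZeroDivisors R)
    [CommRing L] [IsDomain L] [Algebra R L] [IsLocalization M L] :
    UniqueFactorizationMonoid L := by
  classical
  have hinj : Function.Injective (algebraMap R L) := IsLocalization.injective L hM
  have hprime : ∀ p : R, Prime p → ¬ IsUnit (algebraMap R L p) → Prime (algebraMap R L p) := by
    intro p hp hpu
    refine ⟨fun h0 => hp.1 (hinj (by rw [h0, map_zero])), hpu, ?_⟩
    intro y z hyz
    obtain ⟨⟨b, s⟩, hb⟩ := IsLocalization.surj M y
    obtain ⟨⟨d, v⟩, hd⟩ := IsLocalization.surj M z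
    obtain ⟨w, hw⟩ := hyz
    obtain ⟨⟨q, e⟩, hq⟩ := IsLocalization.surj M w
    dsimp only at hb hd hq
    have key2 : b * d * ↑e = p * q * (↑s * ↑v) := by
      apply hinj
      push_cast [map_mul]
      rw [← hb, ← hd, ← hq]
      linear_combination (algebraMap R L ↑s * algebraMap R L ↑v * algebraMap R L ↑e) * hw
    have hpd : p ∣ b * d * ↑e := ⟨q * (↑s * ↑v), by rw [key2]; ring⟩
    rcases hp.2.2 _ _ hpd with hcase | hcase
    · rcases hp.2.2 _ _ hcase with hcase2 | hcase2
      · left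
        obtain ⟨b', rfl⟩ := hcase2
        have hu := IsLocalization.map_units L s
        refine ⟨algebraMap R L b' * ↑hu.unit⁻¹, ?_⟩
        have hy : y * algebraMap R L ↑s * ↑hu.unit⁻¹ = y := by
          rw [mul_assoc]
          simp [IsUnit.unit_spec]
        rw [← hy, hb, map_mul]
        ring
      · right
        obtain ⟨d', rfl⟩ := hcase2
        have hu := IsLocalization.map_units L v
        refine ⟨algebraMap R L d' * ↑hu.unit⁻¹, ?_⟩
        have hz : z * algebraMap R L ↑v * ↑hu.unit⁻¹ = z := by
          rw [mul_assoc]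
          simp [IsUnit.unit_spec]
        rw [← hz, hd, map_mul]
        ring
    · exfalso
      apply hpu
      have : algebraMap R L p ∣ algebraMap R L ↑e := map_dvd _ hcase
      exact isUnit_of_dvd_unit this (IsLocalization.map_units L e)
  have hmsprod : ∀ (m : Multiset L), (∀ b ∈ m, IsUnit b) → IsUnit m.prod := by
    intro m
    induction m using Multiset.induction_on with
    | empty => intro _; simp
    | cons a m ih =>
      intro h
      rw [Multiset.prod_cons]
      exact (h a (Multiset.mem_cons_self _ _)).mul (ih fun b hb => h b (Multiset.mem_cons_of_mem hb))
  refine UniqueFactorizationMonoid.of_exists_prime_factors ?_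
  intro x hx
  obtain ⟨⟨a, s⟩, hxs⟩ := IsLocalization.surj M x
  dsimp only at hxs
  have hsu := IsLocalization.map_units L s
  have ha : a ≠ 0 := by
    rintro rfl
    rw [map_zero] at hxs
    rcases mul_eq_zero.mp hxs with h | h
    · exact hx h
    · exact hsu.ne_zero h
  obtain ⟨f, hf, hfa⟩ := UniqueFactorizationMonoid.exists_prime_factors a ha
  refine ⟨(f.filter fun p => ¬ IsUnit (algebraMap R L p)).map (algebraMap R L), ?_, ?_⟩
  · intro b hb
    rw [Multiset.mem_map] at hb
    obtain ⟨p, hpmem, rfl⟩ := hb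
    rw [Multiset.mem_filter] at hpmem
    exact hprime p (hf p hpmem.1) hpmem.2
  · have hsplit := Multiset.filter_add_not (fun p => IsUnit (algebraMap R L p)) f
    have hunit : IsUnit ((f.filter fun p => IsUnit (algebraMap R L p)).map (algebraMap R L)).prod := by
      apply hmsprod
      intro b hb
      rw [Multiset.mem_map] at hb
      obtain ⟨p, hpmem, rfl⟩ := hb
      exact (Multiset.mem_filter.mp hpmem).2
    have hprod : ((f.filter fun p => IsUnit (algebraMap R L p)).map (algebraMap R L)).prod
        * ((f.filter fun p => ¬ IsUnit (algebraMap R L p)).map (algebraMap R L)).prod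
        = algebraMap R L f.prod := by
      rw [← Multiset.prod_add, ← Multiset.map_add, hsplit, map_multiset_prod]
    have h1 : Associated ((f.filter fun p => ¬ IsUnit (algebraMap R L p)).map (algebraMap R L)).prod
        (algebraMap R L f.prod) := by
      rw [← hprod]
      exact (associated_unit_mul_left _ _ hunit).symm
    have h2 : Associated (algebraMap R L f.prod) (algebraMap R L a) := hfa.map _
    have h3 : Associated (algebraMap R L a) x := by
      refine Associated.symm ⟨hsu.unit, ?_⟩
      rw [IsUnit.unit_spec, hxs]
    exact (h1.trans h2).trans h3

private theorem ufdLaurent (t : ℕ) [hA : IsDomain (AddMonoidAlgebra ℂ (Fin t →₀ ℤ))] :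
    UniqueFactorizationMonoid (AddMonoidAlgebra ℂ (Fin t →₀ ℤ)) := by
  classical
  letI : IsDomain (AddMonoidAlgebra ℂ (Fin t →₀ ℕ)) := NoZeroDivisors.to_isDomain _
  haveI hR : UniqueFactorizationMonoid (AddMonoidAlgebra ℂ (Fin t →₀ ℕ)) :=
    MulEquiv.uniqueFactorizationMonoid
      (RingEquiv.toMulEquiv (RingEquiv.refl (MvPolynomial (Fin t) ℂ) :
        MvPolynomial (Fin t) ℂ ≃+* AddMonoidAlgebra ℂ (Fin t →₀ ℕ)))
      inferInstance
  set ιh : (Fin t →₀ ℕ) →+ (Fin t →₀ ℤ) :=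
    Finsupp.mapRange.addMonoidHom (Nat.castAddMonoidHom ℤ) with hιh
  have hιapp : ∀ (x : Fin t →₀ ℕ) (j : Fin t), ιh x j = ((x j : ℕ) : ℤ) := by
    intro x j
    simp [hιh, Finsupp.mapRange.addMonoidHom, Finsupp.mapRange_apply]
    rfl
  have hι : Function.Injective ιh := by
    intro x y h
    ext j
    have := DFunLike.congr_fun h j
    rw [hιapp, hιapp] at this
    exact_mod_cast this
  set ρ : AddMonoidAlgebra ℂ (Fin t →₀ ℕ) →+* AddMonoidAlgebra ℂ (Fin t →₀ ℤ) :=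
    AddMonoidAlgebra.mapDomainRingHom ℂ ιh with hρdef
  have hρ_apply : ∀ x, ρ x = AddMonoidAlgebra.mapDomain ιh x := fun _ => rfl
  have hρ : Function.Injective ρ := fun x y h => AddMonoidAlgebra.mapDomain_injective hι h
  have hρ_single : ∀ (g : Fin t →₀ ℕ) (c : ℂ),
      ρ (AddMonoidAlgebra.single g c) = AddMonoidAlgebra.single (ιh g) c := by
    intro g c
    rw [hρ_apply]
    exact AddMonoidAlgebra.mapDomain_single
  letI alg : Algebra (AddMonoidAlgebra ℂ (Fin t →₀ ℕ)) (AddMonoidAlgebra ℂ (Fin t →₀ ℤ)) :=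
    ρ.toAlgebra
  have halg : algebraMap (AddMonoidAlgebra ℂ (Fin t →₀ ℕ)) (AddMonoidAlgebra ℂ (Fin t →₀ ℤ)) = ρ :=
    rfl
  set M : Submonoid (AddMonoidAlgebra ℂ (Fin t →₀ ℕ)) :=
    Submonoid.closure (Set.range fun i : Fin t =>
      (AddMonoidAlgebra.single (Finsupp.single i 1) (1:ℂ))) with hMdef
  have hM : M ≤ nonZeroDivisors (AddMonoidAlgebra ℂ (Fin t →₀ ℕ)) := by
    intro x hx
    have hx0 : x ≠ 0 := by
      induction hx using Submonoid.closure_induction with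
      | mem y hy =>
        obtain ⟨i, rfl⟩ := hy
        exact fun h => one_ne_zero (AddMonoidAlgebra.single_eq_zero.mp h)
      | one => exact one_ne_zero
      | mul a b _ _ ha hb => exact mul_ne_zero ha hb
    exact mem_nonZeroDivisors_of_ne_zero hx0
  have hsingle_unit : ∀ g : Fin t →₀ ℤ,
      IsUnit (AddMonoidAlgebra.single g (1:ℂ) : AddMonoidAlgebra ℂ (Fin t →₀ ℤ)) := by
    intro g
    apply IsUnit.of_mul_eq_one (AddMonoidAlgebra.single (-g) (1:ℂ))
    rw [AddMonoidAlgebra.single_mul_single]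
    simp [AddMonoidAlgebra.one_def]
  have prod_single_aux : ∀ (s : Finset (Fin t)) (a : Fin t → (Fin t →₀ ℤ)),
      (∏ i ∈ s, (AddMonoidAlgebra.single (a i) (1:ℂ) : AddMonoidAlgebra ℂ (Fin t →₀ ℤ)))
        = AddMonoidAlgebra.single (∑ i ∈ s, a i) 1 := by
    intro s a
    induction s using Finset.cons_induction with
    | empty => simp [AddMonoidAlgebra.one_def]
    | cons i s his ih =>
      rw [Finset.prod_cons, ih, AddMonoidAlgebra.single_mul_single, Finset.sum_cons, one_mul]
  haveI hloc : IsLocalization M (AddMonoidAlgebra ℂ (Fin t →₀ ℤ)) := by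
    constructor
    constructor
    · rintro ⟨y, hy⟩
      simp only [halg]
      induction hy using Submonoid.closure_induction with
      | mem z hz =>
        obtain ⟨i, rfl⟩ := hz
        rw [hρ_single]
        exact hsingle_unit _
      | one => simp
      | mul a b _ _ ha hb => rw [map_mul]; exact ha.mul hb
    · intro z
      set N : ℕ := z.coeff.support.sup (fun g => Finset.univ.sup fun i : Fin t => (-(g i)).toNat) with hN
      set d : Fin t →₀ ℤ := Finsupp.equivFunOnFinite.symm (fun _ => (N:ℤ)) with hd
      have hdapp : ∀ i, d i = (N:ℤ) := fun i => rfl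
      have hkey : ∀ g ∈ z.coeff.support, ∀ i : Fin t, (0:ℤ) ≤ g i + d i := by
        intro g hg i
        have h1 : (-(g i)).toNat ≤ Finset.univ.sup fun i : Fin t => (-(g i)).toNat :=
          Finset.le_sup (f := fun i : Fin t => (-(g i)).toNat) (Finset.mem_univ i)
        have h2 : (Finset.univ.sup fun i : Fin t => (-(g i)).toNat) ≤ N :=
          Finset.le_sup (f := fun g => Finset.univ.sup fun i : Fin t => (-(g i)).toNat) hg
        have h3 : -(g i) ≤ ((-(g i)).toNat : ℤ) := Int.self_le_toNat _
        have h4 : ((-(g i)).toNat : ℤ) ≤ (N : ℤ) := by exact_mod_cast le_trans h1 h2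
        rw [hdapp]
        omega
      set s : AddMonoidAlgebra ℂ (Fin t →₀ ℕ) :=
        ∏ i : Fin t, (AddMonoidAlgebra.single (Finsupp.single i 1) (1:ℂ))^N with hs
      have hsM : s ∈ M := Submonoid.prod_mem _ fun i _ =>
        Submonoid.pow_mem _ (Submonoid.subset_closure (Set.mem_range_self i)) N
      have hρs : ρ s = AddMonoidAlgebra.single d 1 := by
        rw [hs, map_prod]
        have hterm : ∀ i : Fin t,
            ρ ((AddMonoidAlgebra.single (Finsupp.single i 1) (1:ℂ))^N)
              = AddMonoidAlgebra.single (Finsupp.single i (N:ℤ)) 1 := by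
          intro i
          rw [map_pow, hρ_single, AddMonoidAlgebra.single_pow, one_pow]
          congr 1
          ext j
          rw [Finsupp.smul_apply, hιapp]
          by_cases h : i = j <;> simp [Finsupp.single_apply, h]
        rw [Finset.prod_congr rfl (fun i _ => hterm i), prod_single_aux]
        congr 1
        ext j
        rw [Finsupp.finset_sum_apply, hdapp]
        simp [Finsupp.single_apply]
      set toN : (Fin t →₀ ℤ) → (Fin t →₀ ℕ) := Finsupp.mapRange Int.toNat Int.toNat_zero with htoN
      have hcoords : ∀ g ∈ z.coeff.support, ιh (toN (g + d)) = g + d := by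
        intro g hg
        ext j
        have h0 : (0:ℤ) ≤ (g + d) j := by
          rw [Finsupp.add_apply]
          exact hkey g hg j
        rw [hιapp, htoN, Finsupp.mapRange_apply, Int.toNat_of_nonneg h0]
      set x : AddMonoidAlgebra ℂ (Fin t →₀ ℕ) :=
        ∑ g ∈ z.coeff.support, AddMonoidAlgebra.single (toN (g + d)) (z.coeff g) with hx
      refine ⟨⟨x, ⟨s, hsM⟩⟩, ?_⟩
      simp only [halg]
      rw [hρs, hx, map_sum]
      have hz : z * AddMonoidAlgebra.single d (1:ℂ)
          = ∑ g ∈ z.coeff.support, AddMonoidAlgebra.single (g + d) (z.coeff g) := by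
        conv_lhs => rw [← AddMonoidAlgebra.sum_coeff_single z]
        rw [Finsupp.sum, Finset.sum_mul]
        apply Finset.sum_congr rfl
        intro g hg
        rw [AddMonoidAlgebra.single_mul_single, mul_one]
      rw [hz]
      apply Finset.sum_congr rfl
      intro g hg
      rw [hρ_single, hcoords g hg]
    · intro x y h
      have hxy : x = y := hρ h
      exact ⟨1, by rw [hxy]⟩
  exact locUFD M hM

section Main

variable {G : Type*} [AddCommGroup G]

private noncomputable def chiHom (c : Multiplicative G →* ℂˣ) : Multiplicative G →* (ℕ → ℂ) where
  toFun g := fun n => ((c g : ℂ))^n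
  map_one' := by funext n; simp
  map_mul' g h := by
    funext n
    simp only [map_mul, Units.val_mul, Pi.mul_apply]
    rw [mul_pow]

private noncomputable def psiHom (c : Multiplicative G →* ℂˣ) :
    AddMonoidAlgebra ℂ G →ₐ[ℂ] (ℕ → ℂ) :=
  AddMonoidAlgebra.lift ℂ (ℕ → ℂ) G (chiHom c)

private noncomputable def phiHom (c : Multiplicative G →* ℂˣ) :
    Polynomial (AddMonoidAlgebra ℂ G) →+* (ℕ → ℂ) :=
  eval₂RingHom (psiHom c).toRingHom (fun n => (n : ℂ))

private lemma psi_apply (c : Multiplicative G →* ℂˣ) (a : AddMonoidAlgebra ℂ G) (n : ℕ) :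
    psiHom c a n = ∑ g ∈ a.coeff.support, a.coeff g * ((c (Multiplicative.ofAdd g) : ℂ))^n := by
  rw [psiHom, AddMonoidAlgebra.lift_apply, Finsupp.sum, Finset.sum_apply]
  apply Finset.sum_congr rfl
  intro g hg
  simp [chiHom]

private lemma phi_apply (c : Multiplicative G →* ℂˣ) (p : Polynomial (AddMonoidAlgebra ℂ G))
    (n : ℕ) :
    phiHom c p n = ∑ k ∈ p.support, (psiHom c (p.coeff k) n) * (n:ℂ)^k := by
  rw [phiHom, coe_eval₂RingHom, eval₂_eq_sum, Polynomial.sum_def, Finset.sum_apply]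
  apply Finset.sum_congr rfl
  intro k hk
  simp

private noncomputable def suppOf [DecidableEq G] (p : Polynomial (AddMonoidAlgebra ℂ G)) :
    Finset G :=
  p.support.biUnion fun k => (p.coeff k).coeff.support

private noncomputable def uOf (p : Polynomial (AddMonoidAlgebra ℂ G)) (g : G) : Polynomial ℂ :=
  ∑ k ∈ p.support, Polynomial.monomial k ((p.coeff k).coeff g)

private lemma uOf_coeff (p : Polynomial (AddMonoidAlgebra ℂ G)) (g : G) (j : ℕ) :
    (uOf p g).coeff j = (p.coeff j).coeff g := by
  classical
  rw [uOf, Polynomial.finset_sum_coeff]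
  simp only [Polynomial.coeff_monomial]
  rw [Finset.sum_ite_eq' p.support j (fun k => (p.coeff k).coeff g)]
  split
  · rfl
  · rw [Polynomial.notMem_support_iff.mp ‹_›]
    rfl

private lemma phi_eq [DecidableEq G] (c : Multiplicative G →* ℂˣ)
    (p : Polynomial (AddMonoidAlgebra ℂ G)) (n : ℕ) :
    phiHom c p n
      = ∑ g ∈ suppOf p, (uOf p g).eval (n:ℂ) * ((c (Multiplicative.ofAdd g) : ℂ))^n := by
  rw [phi_apply]
  have h1 : ∀ k ∈ p.support, psiHom c (p.coeff k) n
      = ∑ g ∈ suppOf p, (p.coeff k).coeff g * ((c (Multiplicative.ofAdd g) : ℂ))^n := by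
    intro k hk
    rw [psi_apply]
    apply Finset.sum_subset
    · intro g hg
      exact Finset.mem_biUnion.mpr ⟨k, hk, hg⟩
    · intro g _ hg
      rw [Finsupp.notMem_support_iff.mp hg, zero_mul]
  rw [Finset.sum_congr rfl fun k hk => by rw [h1 k hk]]
  rw [Finset.sum_congr rfl fun k (_ : k ∈ p.support) => Finset.sum_mul _ _ _]
  rw [Finset.sum_comm]
  apply Finset.sum_congr rfl
  intro g _
  rw [uOf, Polynomial.eval_finset_sum, Finset.sum_mul]
  apply Finset.sum_congr rfl
  intro k _
  rw [Polynomial.eval_monomial]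
  ring

private lemma p_eq_zero [DecidableEq G] {p : Polynomial (AddMonoidAlgebra ℂ G)}
    (h : ∀ g ∈ suppOf p, uOf p g = 0) : p = 0 := by
  apply Polynomial.ext
  intro k
  rw [Polynomial.coeff_zero]
  apply AddMonoidAlgebra.coeff_injective
  apply Finsupp.ext
  intro g
  rw [AddMonoidAlgebra.coeff_zero, Finsupp.coe_zero, Pi.zero_apply, ← uOf_coeff]
  by_cases hg : g ∈ suppOf p
  · rw [h g hg, Polynomial.coeff_zero]
  · rw [uOf_coeff]
    by_contra hne
    exact hg (Finset.mem_biUnion.mpr ⟨k,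
      Polynomial.mem_support_iff.mpr (fun h0 => hne (by rw [h0]; rfl)),
      Finsupp.mem_support_iff.mpr hne⟩)

private lemma phi_inj [DecidableEq G] (c : Multiplicative G →* ℂˣ)
    (hc : Function.Injective c) : Function.Injective (phiHom c) := by
  rw [injective_iff_map_eq_zero]
  intro p hp
  by_contra hne
  set T := (suppOf p).filter (fun g => uOf p g ≠ 0) with hT
  have hTne : T.Nonempty := by
    rcases Finset.eq_empty_or_nonempty T with h | h
    · exfalso
      apply hne
      apply p_eq_zero
      intro g hg
      by_contra h2
      exact Finset.eq_empty_iff_forall_notMem.mp h g (Finset.mem_filter.mpr ⟨hg, h2⟩)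
    · exact h
  have hcinj : Function.Injective (fun g : G => c (Multiplicative.ofAdd g)) :=
    fun a b hab => hc hab
  apply keyIndep ((∑ g ∈ T, (uOf p g).natDegree) + T.card) T
    (fun g => c (Multiplicative.ofAdd g)) hcinj.injOn (uOf p)
    (fun g hg => (Finset.mem_filter.mp hg).2) hTne rfl
  intro n
  have h0 : phiHom c p n = 0 := by rw [hp]; rfl
  rw [phi_eq] at h0
  rw [← h0]
  apply Finset.sum_filter_of_ne
  intro g _ hval h0g
  exact hval (by rw [h0g]; simp)

private lemma phi_range_mem [DecidableEq G] (Γ : Subgroup ℂˣ) (c : Multiplicative G →* ℂˣ)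
    (hc : Function.Injective c) (hmem : ∀ g, c g ∈ Γ)
    (hsurj : ∀ x : ℂˣ, x ∈ Γ → ∃ g : Multiplicative G, c g = x) (f : ℕ → ℂ) :
    f ∈ (phiHom c).range ↔ (f = 0 ∨ IsLinRecWithRootsIn Γ f) := by
  constructor
  · rintro ⟨p, rfl⟩
    set T := (suppOf p).filter (fun g => uOf p g ≠ 0) with hT
    have hsum : ∀ n : ℕ, phiHom c p n
        = ∑ g ∈ T, (uOf p g).eval (n:ℂ) * ((c (Multiplicative.ofAdd g) : ℂ))^n := by
      intro n
      rw [phi_eq, hT]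
      refine (Finset.sum_filter_of_ne ?_).symm
      intro g _ hval h0g
      exact hval (by rw [h0g]; simp)
    rcases Finset.eq_empty_or_nonempty T with hTe | hTe
    · left
      funext n
      rw [hsum n, hTe, Finset.sum_empty]
      rfl
    · right
      refine ⟨T.card, fun i => uOf p ((T.equivFin.symm i : T) : G),
        fun i => c (Multiplicative.ofAdd ((T.equivFin.symm i : T) : G)), ?_, ?_, ?_, ?_⟩
      · intro i
        exact (Finset.mem_filter.mp (T.equivFin.symm i).2).2
      · intro i j hij
        have h1 : ((T.equivFin.symm i : T) : G) = ((T.equivFin.symm j : T) : G) := hc hij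
        exact T.equivFin.symm.injective (Subtype.ext h1)
      · intro i
        exact hmem _
      · intro n
        rw [hsum n, ← Finset.sum_coe_sort T
          (fun g => (uOf p g).eval (n:ℂ) * ((c (Multiplicative.ofAdd g) : ℂ))^n)]
        exact (Equiv.sum_comp T.equivFin.symm _).symm
  · rintro (rfl | ⟨r, u, α, hu, hαinj, hαΓ, hval⟩)
    · exact ⟨0, by rw [map_zero]⟩
    · choose gsel hgsel using fun i => hsurj (α i) (hαΓ i)
      refine ⟨∑ i, ∑ k ∈ (u i).support,
        Polynomial.C (AddMonoidAlgebra.single (Multiplicative.toAdd (gsel i))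
          ((u i).coeff k)) * Polynomial.X ^ k, ?_⟩
      funext n
      rw [map_sum, Finset.sum_apply, hval n]
      apply Finset.sum_congr rfl
      intro i _
      rw [map_sum, Finset.sum_apply]
      have hterm : ∀ k ∈ (u i).support,
          phiHom c (Polynomial.C (AddMonoidAlgebra.single (Multiplicative.toAdd (gsel i))
            ((u i).coeff k)) * Polynomial.X ^ k) n
          = (u i).coeff k * ((α i : ℂ))^n * (n:ℂ)^k := by
        intro k _
        rw [map_mul, map_pow]
        have hC : phiHom c (Polynomial.C (AddMonoidAlgebra.single
            (Multiplicative.toAdd (gsel i)) ((u i).coeff k)))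
            = psiHom c (AddMonoidAlgebra.single (Multiplicative.toAdd (gsel i))
              ((u i).coeff k)) := by
          rw [phiHom, coe_eval₂RingHom]
          exact eval₂_C _ _
        have hX : phiHom c Polynomial.X = (fun m : ℕ => (m:ℂ)) := by
          rw [phiHom, coe_eval₂RingHom]
          exact eval₂_X _ _
        rw [hC, hX, Pi.mul_apply, Pi.pow_apply]
        rw [psiHom, AddMonoidAlgebra.lift_single]
        rw [Pi.smul_apply, smul_eq_mul]
        have : chiHom c (Multiplicative.ofAdd (Multiplicative.toAdd (gsel i))) n
            = ((α i : ℂ))^n := by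
          simp [chiHom, hgsel i]
        rw [this]
      rw [Finset.sum_congr rfl hterm]
      rw [Polynomial.eval_eq_sum, Polynomial.sum_def, Finset.sum_mul]
      apply Finset.sum_congr rfl
      intro k _
      ring

end Main

/-- **The ring `R_Γ` of linear recurrences with roots in `Γ`.** Let `Γ ⊂ ℂˣ` be a
torsion-free multiplicative subgroup, free of rank `t ≥ 1`. The set of sequences `ℕ → ℂ`
that are linear recurrences with all roots in `Γ` (or identically zero) is a subring of the
ring of all functions `ℕ → ℂ` under pointwise operations, and this ring is isomorphic to
the Laurent polynomial ring `ℂ[X, T₁^{±1}, …, T_t^{±1}]` (realized as polynomials over the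
group algebra `ℂ[Fin t →₀ ℤ]`); in particular it is an integral domain and a unique
factorisation domain. -/
theorem ring_of_recurrences_isomorphic_laurent
    (Γ : Subgroup ℂˣ) (htf : ∀ g : Γ, g ≠ 1 → ¬IsOfFinOrder g)
    (t : ℕ) (ht : 1 ≤ t) (e : Γ ≃* Multiplicative (Fin t →₀ ℤ)) :
    ∃ S : Subring (ℕ → ℂ),
      (∀ f : ℕ → ℂ, f ∈ S ↔ (f = 0 ∨ IsLinRecWithRootsIn Γ f)) ∧
      Nonempty (S ≃+* Polynomial (AddMonoidAlgebra ℂ (Fin t →₀ ℤ))) ∧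
      ∃ hD : IsDomain S,
        UniqueFactorizationMonoid S := by
  classical
  set c : Multiplicative (Fin t →₀ ℤ) →* ℂˣ := Γ.subtype.comp e.symm.toMonoidHom with hc
  have hcinj : Function.Injective c := by
    intro a b hab
    exact e.symm.injective (Subtype.ext hab)
  have hcmem : ∀ g, c g ∈ Γ := fun g => (e.symm g).2
  have hcsurj : ∀ x : ℂˣ, x ∈ Γ → ∃ g, c g = x := by
    intro x hx
    refine ⟨e ⟨x, hx⟩, ?_⟩
    simp [hc]
  have hinj : Function.Injective ((phiHom c).rangeRestrict) := by
    intro a b hab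
    apply phi_inj c hcinj
    exact congrArg Subtype.val hab
  set eqv : ((phiHom c).range ≃+* Polynomial (AddMonoidAlgebra ℂ (Fin t →₀ ℤ))) :=
    (RingEquiv.ofBijective ((phiHom c).rangeRestrict)
      ⟨hinj, RingHom.rangeRestrict_surjective _⟩).symm with heqv
  refine ⟨(phiHom c).range, fun f => phi_range_mem Γ c hcinj hcmem hcsurj f, ⟨eqv⟩, ?_⟩
  letI : IsDomain (AddMonoidAlgebra ℂ (Fin t →₀ ℤ)) := NoZeroDivisors.to_isDomain _
  haveI := ufdLaurent t
  haveI : UniqueFactorizationMonoid (Polynomial (AddMonoidAlgebra ℂ (Fin t →₀ ℤ))) :=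
    inferInstance
  haveI hD : IsDomain ((phiHom c).range) :=
    MulEquiv.isDomain (Polynomial (AddMonoidAlgebra ℂ (Fin t →₀ ℤ))) eqv.toMulEquiv
  refine ⟨hD, ?_⟩
  exact MulEquiv.uniqueFactorizationMonoid eqv.symm.toMulEquiv inferInstance
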